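/- arXiv:1608.02455 — 4 statements merged into one kernel-verified Lean document; each statement's English description precedes it below -/
import Mathlib

section
/- Let $f(z)=\sum_{k=1}^\infty a_k z^{n_k}$ be a power series with all $a_k\neq 0$ and strictly increasing exponents satisfying $n_{k+1}>n_k^2$ for all $k\ge 1$. Fix $l\ge 1$ and integers $m,j$ with $0\le m,j\le n_{l+1}-1$. Then the power series $z^m f(z)^j$ contains the monomial $(a_{l+1})^j z^{jn_{l+1}+m}$ with nonzero coefficient, and has no other nonzero monomial of degree strictly between $jn_{l+1}+m$ and $n_{l+2}$. -/
/-- Lacunary structure lemma: if `f(z) = ∑_{k≥1} a_k z^{n_k}` with `a_k ≠ 0` and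
`n_{k+1} > n_k²`, then for `0 ≤ m, j ≤ n_{l+1} - 1` the series `z^m f^j` has the
monomial `(a_{l+1})^j z^{j n_{l+1} + m}` and no other nonzero monomial of degree
strictly between `j n_{l+1} + m` and `n_{l+2}`. -/
theorem stmt5 (a : ℕ → ℂ) (n : ℕ → ℕ)
    (ha : ∀ k ≥ 1, a k ≠ 0) (hn : ∀ k ≥ 1, (n k) ^ 2 < n (k + 1))
    (f : PowerSeries ℂ)
    (hf1 : ∀ k ≥ 1, PowerSeries.coeff (n k) f = a k)
    (hf2 : ∀ i : ℕ, (∀ k ≥ 1, n k ≠ i) → PowerSeries.coeff i f = 0)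
    (l : ℕ) (hl : 1 ≤ l) (m j : ℕ) (hm : m < n (l + 1)) (hj : j < n (l + 1)) :
    PowerSeries.coeff (j * n (l + 1) + m) (PowerSeries.X ^ m * f ^ j)
        = (a (l + 1)) ^ j ∧
      (a (l + 1)) ^ j ≠ 0 ∧
      ∀ i : ℕ, j * n (l + 1) + m < i → i < n (l + 2) →
        PowerSeries.coeff i (PowerSeries.X ^ m * f ^ j) = 0 := by
  set N := n (l + 1) with hN
  have hmono : ∀ k, 1 ≤ k → ∀ k', k ≤ k' → n k ≤ n k' := by
    intro k hk k' hk'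
    induction k', hk' using Nat.le_induction with
    | base => exact le_refl _
    | succ k' hkk' ih =>
      exact ih.trans (le_of_lt (lt_of_le_of_lt (Nat.le_self_pow two_ne_zero _)
        (hn k' (hk.trans hkk'))))
  have hsmall : ∀ q, 1 ≤ q → n q < n (l + 2) → n q ≤ N := by
    intro q hq hlt
    rcases le_or_gt q (l + 1) with h1 | h2
    · exact hmono q hq (l + 1) h1
    · exact absurd hlt (not_lt.mpr (hmono (l + 2) (by omega) q h2))
  have key : ∀ j, j ≤ N → (PowerSeries.coeff (j * N) (f ^ j) = a (l + 1) ^ j ∧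
      ∀ d, j * N < d → d < n (l + 2) → PowerSeries.coeff d (f ^ j) = 0) := by
    intro j
    induction j with
    | zero =>
      intro _
      refine ⟨by simp, fun d hd _ => ?_⟩
      simp only [Nat.zero_mul] at hd
      simp [PowerSeries.coeff_one, hd.ne']
    | succ j ih =>
      intro hjN
      obtain ⟨ih1, ih2⟩ := ih (by omega)
      have hsm : (j + 1) * N = j * N + N := Nat.succ_mul j N
      have hdlt : (j + 1) * N < n (l + 2) :=
        lt_of_le_of_lt (by nlinarith) (hn (l + 1) (by omega))
      -- a generic vanishing fact for off-diagonal terms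
      have hterm : ∀ d, d < n (l + 2) → ∀ p q : ℕ, p + q = d → p ≠ j * N ∨ q ≠ N →
          j * N + N ≤ d →
          PowerSeries.coeff p (f ^ j) * PowerSeries.coeff q f = 0 := by
        intro d hdsmall p q hpq hne hge
        by_cases hq : ∃ k, 1 ≤ k ∧ n k = q
        · obtain ⟨k, hk1, hkq⟩ := hq
          have hqle : q ≤ N := by
            have : n k < n (l + 2) := by omega
            simpa [hkq] using hsmall k hk1 this
          rcases eq_or_lt_of_le hqle with heq | hlt
          · rcases hne with hne | hne
            · have : p > j * N ∨ p < j * N ∨ p = j * N := by omega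
              -- q = N, so p = d - N ≥ j*N; if p = j*N contradiction with hne... 
              have hpgt : j * N ≤ p := by omega
              rcases eq_or_lt_of_le hpgt with heq2 | hlt2
              · exact absurd heq2.symm hne
              · rw [ih2 p hlt2 (by omega), zero_mul]
            · exact absurd heq hne
          · have : j * N < p := by omega
            rw [ih2 p this (by omega), zero_mul]
        · push_neg at hq
          rw [hf2 q (fun k hk => hq k hk), mul_zero]
      constructor
      · rw [pow_succ, PowerSeries.coeff_mul]
        rw [Finset.sum_eq_single ((j * N, N) : ℕ × ℕ)]
        · rw [ih1, hf1 (l + 1) (by omega), pow_succ]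
        · rintro ⟨p, q⟩ hmem hne
          have hpq : p + q = (j + 1) * N := Finset.HasAntidiagonal.mem_antidiagonal.mp hmem
          have : p ≠ j * N ∨ q ≠ N := by
            by_contra h
            push_neg at h
            exact hne (Prod.ext h.1 h.2)
          exact hterm _ hdlt p q hpq this (by omega)
        · intro h
          exact absurd (Finset.HasAntidiagonal.mem_antidiagonal.mpr (by ring)) h
      · intro d hd hdsmall
        rw [pow_succ, PowerSeries.coeff_mul]
        apply Finset.sum_eq_zero
        rintro ⟨p, q⟩ hmem
        have hpq : p + q = d := Finset.HasAntidiagonal.mem_antidiagonal.mp hmem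
        have hne : p ≠ j * N ∨ q ≠ N := by omega
        exact hterm d hdsmall p q hpq hne (by omega)
  obtain ⟨k1, k2⟩ := key j (by omega)
  refine ⟨?_, pow_ne_zero _ (ha (l + 1) (by omega)), ?_⟩
  · rw [PowerSeries.coeff_X_pow_mul]
    exact k1
  · intro i hi hi2
    have him : m ≤ i := by omega
    rw [PowerSeries.coeff_X_pow_mul', if_pos him]
    exact k2 (i - m) (by omega) (by omega)
end

section
/- Let $f(z)=\sum_{k=1}^\infty a_k z^{n_k}$ with all $a_k\neq 0$ and $n_{k+1}>n_k^2$ for all $k\ge 1$. For $d\ge 1$, define the $d$-th transcendence index $\nu_d$ of $f$ as the maximal order of vanishing at $0$ of $P(z,f(z))$ over all nonzero polynomials $P\in\mathbb{C}[X,Y]$ of total degree at most $d$. Then for every $l\ge 1$ and every $d$ with $n_l\le d\le n_{l+1}-1$, one has $n_{l+1}\le \nu_d\le n_{l+1}^2-1<n_{l+2}$. -/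
open Finset


private lemma lac_lt {n : ℕ → ℕ} (hn : ∀ k ≥ 1, (n k) ^ 2 < n (k + 1)) :
    ∀ j k, 1 ≤ j → j < k → n j < n k := by
  have hstep : ∀ m, 1 ≤ m → n m < n (m + 1) := fun m hm =>
    lt_of_le_of_lt (Nat.le_self_pow two_ne_zero _) (hn m hm)
  intro j k hj hjk
  induction k with
  | zero => omega
  | succ k ih =>
    rcases Nat.lt_or_ge j k with h | h
    · exact (ih h).trans (hstep k (by omega))
    · have hjk' : j = k := by omega
      subst hjk'; exact hstep j hj

private lemma lac_le {n : ℕ → ℕ} (hn : ∀ k ≥ 1, (n k) ^ 2 < n (k + 1)) :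
    ∀ j k, 1 ≤ j → j ≤ k → n j ≤ n k := by
  intro j k hj hjk
  rcases eq_or_lt_of_le hjk with h | h
  · rw [h]
  · exact (lac_lt hn j k hj h).le

/-- If a coefficient of `f ^ t` below `n (l+2)` is nonzero, then either the index is
exactly `t * n (l+1)`, or it is at most `(t-1) * n (l+1) + n l`. -/
private lemma lacD {n : ℕ → ℕ} {f : PowerSeries ℂ}
    (hn : ∀ k ≥ 1, (n k) ^ 2 < n (k + 1))
    (hf2 : ∀ i : ℕ, (∀ k ≥ 1, n k ≠ i) → PowerSeries.coeff i f = 0)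
    (l : ℕ) (hl : 1 ≤ l) :
    ∀ t m, m < n (l + 2) → PowerSeries.coeff m (f ^ t) ≠ 0 →
      m = t * n (l + 1) ∨ m + n (l + 1) ≤ t * n (l + 1) + n l := by
  have hnl : n l < n (l + 1) := lac_lt hn l (l + 1) hl (by omega)
  intro t
  induction t with
  | zero =>
    intro m _ hm
    left
    have : m = 0 := by
      by_contra h
      rw [pow_zero, PowerSeries.coeff_one, if_neg h] at hm
      exact hm rfl
    omega
  | succ t ih =>
    intro m hmlt hm
    rw [pow_succ', PowerSeries.coeff_mul] at hm
    obtain ⟨⟨p, q⟩, hpq, hne⟩ := Finset.exists_ne_zero_of_sum_ne_zero hm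
    rw [Finset.HasAntidiagonal.mem_antidiagonal] at hpq
    have hp : PowerSeries.coeff p f ≠ 0 := left_ne_zero_of_mul hne
    have hq : PowerSeries.coeff q (f ^ t) ≠ 0 := right_ne_zero_of_mul hne
    obtain ⟨k, hk1, hkp⟩ : ∃ k, 1 ≤ k ∧ n k = p := by
      by_contra h
      push_neg at h
      exact hp (hf2 p fun k hk => h k hk)
    have hkle : k ≤ l + 1 := by
      by_contra h
      have h2 : n (l + 2) ≤ n k := lac_le hn (l + 2) k (by omega) (by omega)
      omega
    have hsucc : (t + 1) * n (l + 1) = t * n (l + 1) + n (l + 1) := by ring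
    rcases ih q (by omega) hq with hq1 | hq2
    · rcases Nat.lt_or_ge k (l + 1) with hk | hk
      · have hpl : p ≤ n l := hkp ▸ lac_le hn k l hk1 (by omega)
        right; omega
      · have hkeq : k = l + 1 := by omega
        left
        rw [hkeq] at hkp
        omega
    · rcases Nat.lt_or_ge k (l + 1) with hk | hk
      · have hpl : p ≤ n l := hkp ▸ lac_le hn k l hk1 (by omega)
        right; omega
      · have hkeq : k = l + 1 := by omega
        rw [hkeq] at hkp
        right; omega

/-- The coefficient of `f ^ t` at `t * n (l+1)` equals `a (l+1) ^ t`. -/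
private lemma lacE {a : ℕ → ℂ} {n : ℕ → ℕ} {f : PowerSeries ℂ}
    (hn : ∀ k ≥ 1, (n k) ^ 2 < n (k + 1))
    (hf1 : ∀ k ≥ 1, PowerSeries.coeff (n k) f = a k)
    (hf2 : ∀ i : ℕ, (∀ k ≥ 1, n k ≠ i) → PowerSeries.coeff i f = 0)
    (l : ℕ) (hl : 1 ≤ l) :
    ∀ t, t ≤ n (l + 1) → PowerSeries.coeff (t * n (l + 1)) (f ^ t) = a (l + 1) ^ t := by
  have hnl : n l < n (l + 1) := lac_lt hn l (l + 1) hl (by omega)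
  have hn2 : n (l + 1) ^ 2 < n (l + 2) := hn (l + 1) (by omega)
  intro t
  induction t with
  | zero => intro _; simp
  | succ t ih =>
    intro hle
    have hmem : (n (l + 1), t * n (l + 1)) ∈ Finset.HasAntidiagonal.antidiagonal ((t + 1) * n (l + 1)) := by
      rw [Finset.HasAntidiagonal.mem_antidiagonal]; ring
    rw [pow_succ', PowerSeries.coeff_mul, Finset.sum_eq_single_of_mem _ hmem]
    · rw [hf1 (l + 1) (by omega), ih (by omega), pow_succ']
    · rintro ⟨p, q⟩ hpq hpqne
      rw [Finset.HasAntidiagonal.mem_antidiagonal] at hpq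
      by_contra h
      have hp : PowerSeries.coeff p f ≠ 0 := left_ne_zero_of_mul h
      have hq : PowerSeries.coeff q (f ^ t) ≠ 0 := right_ne_zero_of_mul h
      obtain ⟨k, hk1, hkp⟩ : ∃ k, 1 ≤ k ∧ n k = p := by
        by_contra h'
        push_neg at h'
        exact hp (hf2 p fun k hk => h' k hk)
      have hsucc : (t + 1) * n (l + 1) = t * n (l + 1) + n (l + 1) := by ring
      have hbound : (t + 1) * n (l + 1) ≤ n (l + 1) * n (l + 1) :=
        Nat.mul_le_mul_right _ hle
      have hsq : n (l + 1) ^ 2 = n (l + 1) * n (l + 1) := sq (n (l + 1))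
      have hkle : k ≤ l + 1 := by
        by_contra h'
        have h2 : n (l + 2) ≤ n k := lac_le hn (l + 2) k (by omega) (by omega)
        omega
      rcases Nat.lt_or_ge k (l + 1) with hk | hk
      · have hpl : p ≤ n l := hkp ▸ lac_le hn k l hk1 (by omega)
        rcases lacD hn hf2 l hl t q (by omega) hq with h1 | h2 <;> omega
      · have hkeq : k = l + 1 := by omega
        rw [hkeq] at hkp
        exact hpqne (by rw [Prod.mk.injEq]; omega)


/-- Two-sided bound on the transcendence index `ν_d` of a lacunary series:
for `n_l ≤ d ≤ n_{l+1} - 1`, one has `n_{l+1} ≤ ν_d ≤ n_{l+1}² - 1 < n_{l+2}`. -/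
theorem stmt6 (a : ℕ → ℂ) (n : ℕ → ℕ)
    (ha : ∀ k ≥ 1, a k ≠ 0) (hn : ∀ k ≥ 1, (n k) ^ 2 < n (k + 1))
    (f : PowerSeries ℂ)
    (hf1 : ∀ k ≥ 1, PowerSeries.coeff (n k) f = a k)
    (hf2 : ∀ i : ℕ, (∀ k ≥ 1, n k ≠ i) → PowerSeries.coeff i f = 0)
    (l : ℕ) (hl : 1 ≤ l) (d : ℕ) (hd : 1 ≤ d)
    (hd1 : n l ≤ d) (hd2 : d + 1 ≤ n (l + 1))
    (ν : ℕ)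
    (hν : IsGreatest {k : ℕ | ∃ P : MvPolynomial (Fin 2) ℂ, P ≠ 0 ∧
      P.totalDegree ≤ d ∧
      (MvPolynomial.aeval ![PowerSeries.X, f] P).order = (k : ℕ)} ν) :
    n (l + 1) ≤ ν ∧ ν ≤ (n (l + 1)) ^ 2 - 1 ∧ (n (l + 1)) ^ 2 - 1 < n (l + 2) := by
  classical
  have hn2 : n (l + 1) ^ 2 < n (l + 2) := hn (l + 1) (by omega)
  -- upper bound
  obtain ⟨P, hPne, hPdeg, hPord⟩ := hν.1
  have hsupp : P.support.Nonempty := MvPolynomial.support_nonempty.2 hPne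
  obtain ⟨w, hw, hws⟩ := Finset.exists_mem_eq_sup P.support hsupp (fun v => v 1)
  set s : ℕ := P.support.sup (fun v => v 1) with hs
  set T : Finset (Fin 2 →₀ ℕ) := P.support.filter (fun v => v 1 = s) with hT
  have hTne : T.Nonempty := ⟨w, Finset.mem_filter.2 ⟨hw, hws.symm⟩⟩
  obtain ⟨v, hvT, hvr⟩ := Finset.exists_mem_eq_sup T hTne (fun v => v 0)
  set r : ℕ := T.sup (fun v => v 0) with hr
  obtain ⟨hvsupp, hvs⟩ := Finset.mem_filter.1 hvT
  have hvc : P.coeff v ≠ 0 := MvPolynomial.mem_support_iff.1 hvsupp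
  have hsum2 : ∀ u : Fin 2 →₀ ℕ, (u.sum fun _ e => e) = u 0 + u 1 := by
    intro u
    rw [Finsupp.sum_fintype _ _ (fun _ => rfl), Fin.sum_univ_two]
  have hdsum : ∀ u ∈ P.support, u 0 + u 1 ≤ d := fun u hu =>
    (hsum2 u) ▸ le_trans (MvPolynomial.le_totalDegree hu) hPdeg
  have hts : ∀ u ∈ P.support, u 1 ≤ s := fun u hu => Finset.le_sup (f := fun v => v 1) hu
  have hrs : ∀ u ∈ P.support, u 1 = s → u 0 ≤ r := fun u hu h =>
    Finset.le_sup (f := fun v => v 0) (Finset.mem_filter.2 ⟨hu, h⟩)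
  have hvd : r + s ≤ d := by
    have := hdsum v hvsupp; omega
  have hnl : n l < n (l + 1) := lac_lt hn l (l + 1) hl (by omega)
  set N : ℕ := s * n (l + 1) + r with hN
  have hsq : n (l + 1) ^ 2 = n (l + 1) * n (l + 1) := sq (n (l + 1))
  have hN2 : N + 1 ≤ n (l + 1) ^ 2 := by
    have h1 : (s + r + 1) * n (l + 1) ≤ n (l + 1) * n (l + 1) := Nat.mul_le_mul_right _ (by omega)
    have h2 : (r + 1) * 1 ≤ (r + 1) * n (l + 1) := Nat.mul_le_mul_left _ (by omega)
    have hexp : (s + r + 1) * n (l + 1) = s * n (l + 1) + (r + 1) * n (l + 1) := by ring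
    omega
  have hco : PowerSeries.coeff N (MvPolynomial.aeval ![PowerSeries.X, f] P)
      = P.coeff v * a (l + 1) ^ s := by
    rw [MvPolynomial.aeval_def, MvPolynomial.eval₂_eq', map_sum]
    have hterm : ∀ u : Fin 2 →₀ ℕ,
        PowerSeries.coeff N ((algebraMap ℂ (PowerSeries ℂ)) (P.coeff u) *
          ∏ i, (![PowerSeries.X, f] : Fin 2 → PowerSeries ℂ) i ^ u i)
        = P.coeff u * (if u 0 ≤ N then PowerSeries.coeff (N - u 0) (f ^ u 1) else 0) := by
      intro u
      rw [Fin.prod_univ_two]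
      simp only [Matrix.cons_val_zero, Matrix.cons_val_one, Matrix.head_cons]
      rw [← PowerSeries.C_eq_algebraMap, PowerSeries.coeff_C_mul,
        PowerSeries.coeff_X_pow_mul']
    rw [Finset.sum_eq_single_of_mem v hvsupp]
    · rw [hterm v, hvs, ← hvr, if_pos (by omega : r ≤ N)]
      have hNr : N - r = s * n (l + 1) := by omega
      rw [hNr, lacE hn hf1 hf2 l hl s (by omega)]
    · intro u hu hne
      rw [hterm u]
      rcases Nat.lt_or_ge N (u 0) with hc | hc
      · rw [if_neg (by omega), mul_zero]
      rw [if_pos hc]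
      have hmN : (N - u 0) + u 0 = N := by omega
      have hut : u 1 ≤ s := hts u hu
      have hud : u 0 + u 1 ≤ d := hdsum u hu
      have hz : PowerSeries.coeff (N - u 0) (f ^ u 1) = 0 := by
        by_contra hz
        have hsucc : (u 1 + 1) * n (l + 1) = u 1 * n (l + 1) + n (l + 1) := by ring
        rcases lacD hn hf2 l hl (u 1) (N - u 0) (by omega) hz with h1 | h2
        · rcases eq_or_lt_of_le hut with hts' | hts'
          · -- u 1 = s, m = s * n (l + 1), hence u 0 = r and u = v
            have h0 : u 0 = v 0 := by
              rw [hts'] at h1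
              omega
            have h1' : u 1 = v 1 := by rw [hts', hvs]
            exact hne (Finsupp.ext fun i => by fin_cases i <;> first | exact h0 | exact h1')
          · have hmul1 : (u 1 + 1) * n (l + 1) ≤ s * n (l + 1) := Nat.mul_le_mul_right _ (by omega)
            omega
        · rcases eq_or_lt_of_le hut with hts' | hts'
          · have hur : u 0 ≤ r := hrs u hu hts'
            have : u 1 * n (l + 1) = s * n (l + 1) := by rw [hts']
            omega
          · have hmul1 : (u 1 + 1) * n (l + 1) ≤ s * n (l + 1) := Nat.mul_le_mul_right _ (by omega)
            omega
      rw [hz, mul_zero]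
  have hcone : PowerSeries.coeff N (MvPolynomial.aeval ![PowerSeries.X, f] P) ≠ 0 := by
    rw [hco]
    exact mul_ne_zero hvc (pow_ne_zero _ (ha (l + 1) (by omega)))
  have hordle := PowerSeries.order_le N hcone
  rw [hPord] at hordle
  have hνN : ν ≤ N := by exact_mod_cast hordle
  refine ⟨?_, by omega, by omega⟩
  -- lower bound: the polynomial Y - ∑_{k=1}^l a_k X^{n_k}
  clear hco hcone hordle hνN hvc hvd hrs hts hdsum hvs hvsupp hvr hvT hTne hws hw hPord hPdeg hPne hsupp hN2 hN hsq hr hT hs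
  set Q : MvPolynomial (Fin 2) ℂ :=
    MvPolynomial.X 1 - ∑ k ∈ Finset.Icc 1 l, MvPolynomial.C (a k) * MvPolynomial.X 0 ^ (n k)
    with hQ
  have hQev : MvPolynomial.aeval ![PowerSeries.X, f] Q
      = f - ∑ k ∈ Finset.Icc 1 l, PowerSeries.C (a k) * PowerSeries.X ^ (n k) := by
    rw [hQ, map_sub, map_sum, MvPolynomial.aeval_X]
    simp only [Matrix.cons_val_one, Matrix.head_cons]
    congr 1
    refine Finset.sum_congr rfl fun k _ => ?_
    rw [map_mul, map_pow, MvPolynomial.aeval_X, MvPolynomial.aeval_C]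
    simp only [Matrix.cons_val_zero, ← PowerSeries.C_eq_algebraMap]
  have hcoeffQ : ∀ j, PowerSeries.coeff j (MvPolynomial.aeval ![PowerSeries.X, f] Q)
      = PowerSeries.coeff j f - ∑ k ∈ Finset.Icc 1 l, if j = n k then a k else 0 := by
    intro j
    rw [hQev, map_sub, map_sum]
    congr 1
    refine Finset.sum_congr rfl fun k _ => ?_
    rw [PowerSeries.coeff_C_mul, PowerSeries.coeff_X_pow]
    split_ifs <;> simp
  have hord : (MvPolynomial.aeval ![PowerSeries.X, f] Q).order = (n (l + 1) : ℕ) := by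
    rw [PowerSeries.order_eq_nat]
    constructor
    · rw [hcoeffQ, hf1 (l + 1) (by omega), Finset.sum_eq_zero, sub_zero]
      · exact ha (l + 1) (by omega)
      · intro k hk
        rw [Finset.mem_Icc] at hk
        rw [if_neg]
        have : n k ≤ n l := lac_le hn k l hk.1 hk.2
        omega
    · intro i hi
      rw [hcoeffQ]
      by_cases hcase : ∃ k, (1 ≤ k ∧ k ≤ l) ∧ n k = i
      · obtain ⟨k0, ⟨hk01, hk0l⟩, hk0⟩ := hcase
        rw [Finset.sum_eq_single_of_mem k0 (Finset.mem_Icc.2 ⟨hk01, hk0l⟩)]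
        · rw [if_pos hk0.symm, ← hk0, hf1 k0 hk01, sub_self]
        · intro k hk hne
          rw [Finset.mem_Icc] at hk
          rw [if_neg]
          intro h
          rcases Nat.lt_or_ge k k0 with h' | h'
          · exact absurd (hk0 ▸ h ▸ lac_lt hn k k0 hk.1 h') (lt_irrefl _)
          · have h'' : k0 < k := by omega
            exact absurd (h ▸ hk0 ▸ lac_lt hn k0 k hk01 h'') (lt_irrefl _)
      · push_neg at hcase
        have h0 : PowerSeries.coeff i f = 0 := by
          refine hf2 i fun k hk1 h => ?_
          rcases le_or_gt k l with h' | h'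
          · exact hcase k ⟨hk1, h'⟩ h
          · have : n (l + 1) ≤ n k := lac_le hn (l + 1) k (by omega) (by omega)
            omega
        rw [h0, Finset.sum_eq_zero, sub_zero]
        intro k hk
        rw [Finset.mem_Icc] at hk
        exact if_neg fun h => hcase k ⟨hk.1, hk.2⟩ h.symm
  have hQne : Q ≠ 0 := by
    intro h
    rw [h, map_zero, PowerSeries.order_zero] at hord
    exact (by simp : (⊤ : ℕ∞) ≠ (n (l + 1) : ℕ)) hord
  have hQdeg : Q.totalDegree ≤ d := by
    refine le_trans (MvPolynomial.totalDegree_sub _ _) (max_le ?_ ?_)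
    · rw [MvPolynomial.totalDegree_X]; exact hd
    · refine le_trans (MvPolynomial.totalDegree_finset_sum _ _) (Finset.sup_le fun k hk => ?_)
      refine le_trans (MvPolynomial.totalDegree_mul _ _) ?_
      rw [MvPolynomial.totalDegree_C, MvPolynomial.totalDegree_X_pow, zero_add]
      rw [Finset.mem_Icc] at hk
      exact le_trans (lac_le hn k l hk.1 hk.2) hd1
  exact hν.2 ⟨Q, hQne, hQdeg, hord⟩
end

section
/- Consider a polynomial recurrence $a_{k+1}=Q(k,a_k,a_{k-1},\ldots,a_{k-r+1})$ where $Q(k,u_1,\ldots,u_r)=\sum_{|\beta|\le d_1} p_\beta(k) u^\beta$, the functions $p_\beta(k)=\sum_{i=0}^{d_2} c_{\beta,i}(1/k)^i$ have rational coefficients $c_{\beta,i}$, and the initial terms $a_0,\ldots,a_{r-1}$ are rational. Let $L_1$ be a common denominator of all the $c_{\beta,i}$ and $L_2$ a common denominator of $a_0,\ldots,a_{r-1}$. For $k\ge r-1$ let $D_k$ denote the minimal common denominator of $a_0,\ldots,a_k$. Then for all $k\ge r-1$, $D_k\le e^{M d_1^{k-r+1} k\log k}$, where $M=\max\left(\frac{\log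 L_2}{(r-1)\log(r-1)},\ d_2+\frac{\log L_1}{\log 2}\right)$ (assume $r\ge 3$ so that $(r-1)\log(r-1)>0$, and $d_1\ge 1$). -/
private lemma den_dvd_iff_exists (n : ℕ) (hn : n ≠ 0) (x : ℚ) :
    x.den ∣ n ↔ ∃ z : ℤ, (n : ℚ) * x = (z : ℚ) := by
  constructor
  · rintro ⟨m, hm⟩
    refine ⟨m * x.num, ?_⟩
    rw [hm]
    push_cast
    rw [mul_comm (x.den : ℚ) (m : ℚ), mul_assoc, Rat.den_mul_eq_num]
  · rintro ⟨z, hz⟩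
    have hn' : (n : ℚ) ≠ 0 := by exact_mod_cast hn
    have hx : x = (z : ℚ) / (n : ℚ) := by field_simp [hn'] at hz ⊢; linarith [hz]
    have : x = Rat.divInt z (n : ℤ) := by rw [hx, Rat.divInt_eq_div]; norm_cast
    rw [this]
    exact_mod_cast Rat.den_dvd z (n : ℤ)

private lemma den_sum_dvd {ι : Type*} (s : Finset ι) (f : ι → ℚ) (n : ℕ) (hn : n ≠ 0)
    (h : ∀ i ∈ s, (f i).den ∣ n) : (∑ i ∈ s, f i).den ∣ n := by
  induction s using Finset.cons_induction with
  | empty => simp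
  | cons i s hi ih =>
    rw [Finset.sum_cons]
    rw [den_dvd_iff_exists n hn]
    obtain ⟨z1, hz1⟩ := (den_dvd_iff_exists n hn _).1 (h i (Finset.mem_cons_self ..))
    obtain ⟨z2, hz2⟩ := (den_dvd_iff_exists n hn _).1
      (ih fun j hj => h j (Finset.mem_cons_of_mem hj))
    exact ⟨z1 + z2, by push_cast; rw [mul_add, hz1, hz2]⟩

private lemma den_prod_dvd {ι : Type*} (s : Finset ι) (f : ι → ℚ) :
    (∏ i ∈ s, f i).den ∣ ∏ i ∈ s, (f i).den := by
  induction s using Finset.cons_induction with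
  | empty => simp
  | cons i s hi ih =>
    rw [Finset.prod_cons, Finset.prod_cons]
    exact (Rat.mul_den_dvd _ _).trans (mul_dvd_mul dvd_rfl ih)

set_option maxHeartbeats 1000000 in
/-- Denominator growth for polynomial recurrences `a_{k+1} = Q(k, a_k, …, a_{k-r+1})`
with rational data: `D_k ≤ exp(M d₁^{k-r+1} k log k)`. Here `Q` is a polynomial of
degree `≤ d₁` in `u = (u_1, …, u_r)` whose coefficients are polynomials of degree
`≤ d₂` in `1/k`, `L₁` is a common denominator of all coefficients `c_{β,i}` of `Q`,
`L₂` a common denominator of the initial terms, and `D_k` the minimal common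
denominator of `a_0, …, a_k`. -/
theorem stmt8 (r d₁ d₂ : ℕ) (hr : 3 ≤ r) (hd₁ : 1 ≤ d₁)
    (Q : MvPolynomial (Fin r) (Polynomial ℚ))
    (hQdeg : Q.totalDegree ≤ d₁)
    (hpdeg : ∀ β ∈ Q.support, (Q.coeff β).natDegree ≤ d₂)
    (L₁ L₂ : ℕ) (hL₁ : 0 < L₁) (hL₂ : 0 < L₂)
    (hL₁den : ∀ β i, ((Q.coeff β).coeff i).den ∣ L₁)
    (a : ℕ → ℚ)
    (hL₂den : ∀ j < r, (a j).den ∣ L₂)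
    (hrec : ∀ k : ℕ, r - 1 ≤ k →
      a (k + 1) = MvPolynomial.eval (fun s : Fin r => a (k - (s : ℕ)))
        (MvPolynomial.map (Polynomial.evalRingHom ((k : ℚ)⁻¹)) Q))
    (M : ℝ)
    (hM : M = max (Real.log L₂ / ((r - 1 : ℝ) * Real.log (r - 1 : ℝ)))
      ((d₂ : ℝ) + Real.log L₁ / Real.log 2))
    (D : ℕ → ℕ)
    (hD : ∀ k, D k = (Finset.range (k + 1)).lcm fun j => (a j).den) :
    ∀ k : ℕ, r - 1 ≤ k →
      (D k : ℝ) ≤ Real.exp (M * (d₁ : ℝ) ^ (k - r + 1) * k * Real.log k) := by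
  -- positivity of D
  have hDpos : ∀ m, 0 < D m := by
    intro m
    rw [hD]
    refine Nat.pos_of_ne_zero fun h => ?_
    rw [Finset.lcm_eq_zero_iff] at h
    obtain ⟨j, _, hj⟩ := h
    exact (a j).den_ne_zero hj
  -- the key divisibility for one step
  have hdvd : ∀ k, r - 1 ≤ k → (a (k + 1)).den ∣ L₁ * k ^ d₂ * D k ^ d₁ := by
    intro k hk
    have hk2 : 2 ≤ k := le_trans (by omega) hk
    have hn : L₁ * k ^ d₂ * D k ^ d₁ ≠ 0 := by
      have := hDpos k
      positivity
    rw [hrec k hk, MvPolynomial.eval_map, MvPolynomial.eval₂_eq]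
    apply den_sum_dvd _ _ _ hn
    intro β hβ
    refine dvd_trans (Rat.mul_den_dvd _ _) (mul_dvd_mul ?_ ?_)
    · -- coefficient part
      simp only [Polynomial.coe_evalRingHom]
      rw [Polynomial.eval_eq_sum_range]
      apply den_sum_dvd _ _ _ (by positivity)
      intro i hi
      refine (Rat.mul_den_dvd _ _).trans (mul_dvd_mul (hL₁den β i) ?_)
      have h1 : ((k : ℚ)⁻¹).den ∣ k := by
        rw [den_dvd_iff_exists k (by omega)]
        exact ⟨1, by field_simp; norm_num⟩
      have h2 : (((k : ℚ)⁻¹) ^ i).den ∣ k ^ i := by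
        rw [Rat.den_pow]
        exact pow_dvd_pow_of_dvd h1 i
      refine h2.trans (pow_dvd_pow k ?_)
      have := hpdeg β hβ
      simp only [Finset.mem_range] at hi
      omega
    · -- monomial part
      refine (den_prod_dvd _ _).trans ?_
      have hst : ∀ s : Fin r, (a (k - (s : ℕ)) ^ β s).den ∣ D k ^ β s := by
        intro s
        rw [Rat.den_pow]
        refine pow_dvd_pow_of_dvd ?_ _
        rw [hD]
        exact Finset.dvd_lcm (Finset.mem_range.2 (by omega))
      refine (Finset.prod_dvd_prod_of_dvd _ _ fun s _ => hst s).trans ?_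
      rw [Finset.prod_pow_eq_pow_sum]
      apply pow_dvd_pow
      have h2 : (β.sum fun _ e => e) ≤ Q.totalDegree := MvPolynomial.le_totalDegree hβ
      exact h2.trans hQdeg
  -- divisibility of the lcm
  have hDstep : ∀ k, r - 1 ≤ k → D (k + 1) ∣ L₁ * k ^ d₂ * D k ^ d₁ := by
    intro k hk
    rw [hD]
    apply Finset.lcm_dvd
    intro j hj
    rw [Finset.mem_range] at hj
    rcases eq_or_lt_of_le (Nat.lt_succ_iff.mp hj) with h | h
    · rw [h]; exact hdvd k hk
    · have h1 : (a j).den ∣ D k := by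
        rw [hD]; exact Finset.dvd_lcm (Finset.mem_range.2 (by omega))
      exact h1.trans ((dvd_pow_self (D k) (by omega)).trans (dvd_mul_left _ _))
  -- basic real facts
  have hr2 : (2 : ℝ) ≤ (r : ℝ) - 1 := by
    have : (3 : ℝ) ≤ (r : ℝ) := by exact_mod_cast hr
    linarith
  have hlogr : 0 < Real.log ((r : ℝ) - 1) := Real.log_pos (by linarith)
  have hlog2 : 0 < Real.log 2 := Real.log_pos (by norm_num)
  have hlogL1 : 0 ≤ Real.log L₁ := Real.log_nonneg (by exact_mod_cast hL₁)
  have hM2 : (d₂ : ℝ) + Real.log L₁ / Real.log 2 ≤ M := hM ▸ le_max_right _ _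
  have hM0 : 0 ≤ M := by
    have : 0 ≤ (d₂ : ℝ) + Real.log L₁ / Real.log 2 := by positivity
    linarith
  have hM1 : Real.log L₂ ≤ M * (((r : ℝ) - 1) * Real.log ((r : ℝ) - 1)) := by
    have h := hM ▸ le_max_left (Real.log L₂ / ((r - 1 : ℝ) * Real.log (r - 1 : ℝ)))
      ((d₂ : ℝ) + Real.log L₁ / Real.log 2)
    have hpos : 0 < ((r : ℝ) - 1) * Real.log ((r : ℝ) - 1) := by positivity
    calc Real.log L₂ = Real.log L₂ / (((r : ℝ) - 1) * Real.log ((r : ℝ) - 1))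
          * (((r : ℝ) - 1) * Real.log ((r : ℝ) - 1)) := by field_simp
      _ ≤ M * (((r : ℝ) - 1) * Real.log ((r : ℝ) - 1)) :=
          mul_le_mul_of_nonneg_right h hpos.le
  -- strengthened induction
  have key : ∀ k, r - 1 ≤ k → Real.log (D k) ≤ M * (d₁ : ℝ) ^ (k - (r - 1)) * k * Real.log k := by
    intro k hk
    induction k, hk using Nat.le_induction with
    | base =>
      have hdvd0 : D (r - 1) ∣ L₂ := by
        rw [hD]
        apply Finset.lcm_dvd
        intro j hj
        rw [Finset.mem_range] at hj
        exact hL₂den j (by omega)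
      have hle : (D (r - 1) : ℝ) ≤ (L₂ : ℝ) := by
        exact_mod_cast Nat.le_of_dvd hL₂ hdvd0
      have h1 : Real.log (D (r - 1)) ≤ Real.log L₂ :=
        Real.log_le_log (by exact_mod_cast hDpos (r - 1)) hle
      have hcast : ((r - 1 : ℕ) : ℝ) = (r : ℝ) - 1 := by
        push_cast [Nat.cast_sub (by omega : 1 ≤ r)]; ring
      rw [Nat.sub_self, pow_zero, hcast]
      calc Real.log (D (r - 1)) ≤ Real.log L₂ := h1
        _ ≤ M * (((r : ℝ) - 1) * Real.log ((r : ℝ) - 1)) := hM1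
        _ = M * 1 * ((r : ℝ) - 1) * Real.log ((r : ℝ) - 1) := by ring
    | succ k hk ih =>
      have hk2 : 2 ≤ k := by omega
      have hk2' : (2 : ℝ) ≤ (k : ℝ) := by exact_mod_cast hk2
      have hDk : (1 : ℝ) ≤ (D k : ℝ) := by exact_mod_cast hDpos k
      have hDk1 : (0 : ℝ) < (D (k + 1) : ℝ) := by exact_mod_cast hDpos (k + 1)
      have hlogk : 0 ≤ Real.log k := Real.log_nonneg (by linarith)
      have hlogk1 : Real.log k ≤ Real.log (k + 1) := by
        apply Real.log_le_log (by linarith)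
        push_cast; linarith
      have hlog2k : Real.log 2 ≤ Real.log ((k : ℝ) + 1) := by
        apply Real.log_le_log (by norm_num)
        linarith
      have hexp : k + 1 - (r - 1) = (k - (r - 1)) + 1 := by omega
      rw [hexp]
      -- bound log D (k+1)
      have hle : (D (k + 1) : ℝ) ≤ ((L₁ * k ^ d₂ * D k ^ d₁ : ℕ) : ℝ) := by
        exact_mod_cast Nat.le_of_dvd (by have := hDpos k; positivity) (hDstep k hk)
      have h1 : Real.log (D (k + 1)) ≤
          Real.log L₁ + (d₂ : ℝ) * Real.log k + (d₁ : ℝ) * Real.log (D k) := by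
        refine (Real.log_le_log hDk1 hle).trans_eq ?_
        push_cast
        rw [Real.log_mul (by positivity) (by positivity),
            Real.log_mul (by positivity) (by positivity),
            Real.log_pow, Real.log_pow]
      have h2 : (d₁ : ℝ) * Real.log (D k) ≤
          M * (d₁ : ℝ) ^ ((k - (r - 1)) + 1) * k * Real.log k := by
        have := mul_le_mul_of_nonneg_left ih (by positivity : (0:ℝ) ≤ (d₁ : ℝ))
        calc (d₁ : ℝ) * Real.log (D k)
            ≤ (d₁ : ℝ) * (M * (d₁ : ℝ) ^ (k - (r - 1)) * k * Real.log k) := this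
          _ = M * (d₁ : ℝ) ^ ((k - (r - 1)) + 1) * k * Real.log k := by
              rw [pow_succ]; ring
      -- the remainder
      have hd₁R : (1 : ℝ) ≤ (d₁ : ℝ) := by exact_mod_cast hd₁
      have hpow1 : (1 : ℝ) ≤ (d₁ : ℝ) ^ ((k - (r - 1)) + 1) := by
        simpa using pow_le_pow_left₀ (by norm_num) hd₁R ((k - (r - 1)) + 1)
      set X := M * (d₁ : ℝ) ^ ((k - (r - 1)) + 1) with hX
      have hMX : M ≤ X := le_mul_of_one_le_right hM0 hpow1
      have hX0 : 0 ≤ X := le_trans hM0 hMX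
      have hlogk1' : 0 ≤ Real.log ((k : ℝ) + 1) := le_trans hlogk hlogk1
      have hA : Real.log ((k : ℝ) + 1) ≤
          ((k : ℝ) + 1) * Real.log ((k : ℝ) + 1) - (k : ℝ) * Real.log k := by
        nlinarith [mul_le_mul_of_nonneg_left hlogk1 (show (0:ℝ) ≤ (k : ℝ) by linarith)]
      have hB : Real.log L₁ + (d₂ : ℝ) * Real.log k ≤ M * Real.log ((k : ℝ) + 1) := by
        have e1 : (d₂ : ℝ) * Real.log k ≤ (d₂ : ℝ) * Real.log ((k : ℝ) + 1) :=
          mul_le_mul_of_nonneg_left hlogk1 (by positivity)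
        have e2 : Real.log L₁ ≤ (Real.log L₁ / Real.log 2) * Real.log ((k : ℝ) + 1) := by
          rw [div_mul_eq_mul_div, le_div_iff₀ hlog2]
          exact mul_le_mul_of_nonneg_left hlog2k hlogL1
        have e3 : ((d₂ : ℝ) + Real.log L₁ / Real.log 2) * Real.log ((k : ℝ) + 1) ≤
            M * Real.log ((k : ℝ) + 1) := mul_le_mul_of_nonneg_right hM2 hlogk1'
        rw [add_mul] at e3
        linarith
      have hC : M * Real.log ((k : ℝ) + 1) ≤
          X * (((k : ℝ) + 1) * Real.log ((k : ℝ) + 1) - (k : ℝ) * Real.log k) := by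
        have e1 : M * Real.log ((k : ℝ) + 1) ≤ X * Real.log ((k : ℝ) + 1) :=
          mul_le_mul_of_nonneg_right hMX hlogk1'
        have e2 := mul_le_mul_of_nonneg_left hA hX0
        linarith
      have hsplit : X * ((k : ℝ) + 1) * Real.log ((k : ℝ) + 1) =
          X * (((k : ℝ) + 1) * Real.log ((k : ℝ) + 1) - (k : ℝ) * Real.log k)
            + X * (k : ℝ) * Real.log k := by ring
      push_cast
      linarith
  -- deduce the statement
  intro k hk
  have h := key k hk
  have hk2' : (2 : ℝ) ≤ (k : ℝ) := by
    have : 2 ≤ k := by omega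
    exact_mod_cast this
  have hlogk : 0 ≤ Real.log k := Real.log_nonneg (by linarith)
  have hd₁R : (1 : ℝ) ≤ (d₁ : ℝ) := by exact_mod_cast hd₁
  have hpow : (d₁ : ℝ) ^ (k - (r - 1)) ≤ (d₁ : ℝ) ^ (k - r + 1) :=
    pow_le_pow_right₀ hd₁R (by omega)
  have h2 : M * (d₁ : ℝ) ^ (k - (r - 1)) * k * Real.log k ≤
      M * (d₁ : ℝ) ^ (k - r + 1) * k * Real.log k := by
    have hkpos : (0:ℝ) ≤ (k : ℝ) := by linarith
    have := mul_le_mul_of_nonneg_left hpow hM0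
    nlinarith [mul_le_mul_of_nonneg_right (mul_le_mul_of_nonneg_right this hkpos) hlogk]
  rw [← Real.exp_log (by exact_mod_cast hDpos k : (0:ℝ) < (D k : ℝ))]
  exact Real.exp_le_exp.2 (h.trans h2)
end

section
/- Let $f(z)=\sum_{k=1}^\infty a_kz^{n_k}$ with $a_k\neq 0$ and $n_{k+1}>n_k^2$ for all $k$. Then $f$ is transcendental over $\mathbb{C}(z)$: for every nonzero polynomial $P\in\mathbb{C}[X,Y]$, the function $z\mapsto P(z,f(z))$ is not identically zero. -/
open Polynomial PowerSeries

/-- A lacunary series `f(z) = ∑_{k≥1} a_k z^{n_k}` with `a_k ≠ 0` and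
`n_{k+1} > n_k²` is transcendental: for every nonzero polynomial `P ∈ ℂ[X,Y]`,
the series `P(z, f(z))` is not identically zero. -/
theorem stmt15 (a : ℕ → ℂ) (n : ℕ → ℕ)
    (ha : ∀ k ≥ 1, a k ≠ 0) (hn : ∀ k ≥ 1, (n k) ^ 2 < n (k + 1))
    (f : PowerSeries ℂ)
    (hf1 : ∀ k ≥ 1, PowerSeries.coeff (n k) f = a k)
    (hf2 : ∀ i : ℕ, (∀ k ≥ 1, n k ≠ i) → PowerSeries.coeff i f = 0) :
    ∀ P : MvPolynomial (Fin 2) ℂ, P ≠ 0 →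
      MvPolynomial.aeval ![PowerSeries.X, f] P ≠ 0 := by
  -- basic monotonicity facts about `n`
  have hstep : ∀ k ≥ 1, n k < n (k + 1) := fun k hk =>
    lt_of_le_of_lt (Nat.le_self_pow two_ne_zero _) (hn k hk)
  have hmono : ∀ j k, 1 ≤ j → j < k → n j < n k := by
    intro j k hj hjk
    induction k with
    | zero => omega
    | succ k ih =>
      rcases Nat.lt_succ_iff_lt_or_eq.mp hjk with h | h
      · exact lt_trans (ih h) (hstep k (by omega))
      · subst h; exact hstep j hj
  have hlb : ∀ m, m ≤ n (m + 1) := by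
    intro m
    induction m with
    | zero => exact Nat.zero_le _
    | succ m ih => have := hmono (m + 1) (m + 1 + 1) (by omega) (by omega); omega
  intro P hP
  -- the map to `(ℂ[X])[Y]`
  set φ : MvPolynomial (Fin 2) ℂ →+* Polynomial (Polynomial ℂ) :=
    (MvPolynomial.aeval (R := ℂ)
      (![Polynomial.C Polynomial.X, Polynomial.X] :
        Fin 2 → Polynomial (Polynomial ℂ))).toRingHom with hφdef
  set ψ : Polynomial (Polynomial ℂ) →+* MvPolynomial (Fin 2) ℂ :=
    Polynomial.eval₂RingHom
      (Polynomial.eval₂RingHom MvPolynomial.C (MvPolynomial.X 0)) (MvPolynomial.X 1) with hψdef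
  have hψφ : ∀ p : MvPolynomial (Fin 2) ℂ, ψ (φ p) = p := by
    have h : ψ.comp φ = RingHom.id _ := by
      apply MvPolynomial.ringHom_ext
      · intro r
        simp [hφdef, hψdef]
      · intro i
        fin_cases i <;> simp [hφdef, hψdef]
    intro p
    exact DFunLike.congr_fun h p
  set Q : Polynomial (Polynomial ℂ) := φ P with hQdef
  have hQ0 : Q ≠ 0 := fun h => hP (by rw [← hψφ P, ← hQdef, h, map_zero])
  -- key: evaluation of `P` at `(X, y)` equals evaluation of `Q`
  have key : ∀ y : PowerSeries ℂ,
      MvPolynomial.aeval ![PowerSeries.X, y] P =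
        Polynomial.eval y (Q.map Polynomial.coeToPowerSeries.ringHom) := by
    intro y
    have h : (MvPolynomial.aeval (R := ℂ)
        (![PowerSeries.X, y] : Fin 2 → PowerSeries ℂ)).toRingHom =
        ((Polynomial.evalRingHom y).comp
          (Polynomial.mapRingHom Polynomial.coeToPowerSeries.ringHom)).comp φ := by
      apply MvPolynomial.ringHom_ext
      · intro r
        simp [hφdef, Polynomial.coeToPowerSeries.ringHom_apply, PowerSeries.algebraMap_apply]
      · intro i
        fin_cases i <;>
          simp [hφdef, Polynomial.coeToPowerSeries.ringHom_apply]
    exact DFunLike.congr_fun h P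
  -- set up all the constants
  set d : ℕ := max Q.natDegree (Q.support.sup fun j => (Q.coeff j).natDegree) with hddef
  have hcd : ∀ j, (Q.coeff j).natDegree ≤ d := by
    intro j
    by_cases hj : j ∈ Q.support
    · exact le_trans (Finset.le_sup (f := fun j => (Q.coeff j).natDegree) hj) (le_max_right _ _)
    · simp [Polynomial.notMem_support_iff.mp hj]
  have hsd : Q.natDegree ≤ d := le_max_left _ _
  set l : ℕ := d + 2 with hldef
  have hl1 : 1 ≤ l := by omega
  have hdnl : d < n l := lt_of_lt_of_le (by omega) (hlb (d + 1))
  set M : ℕ := n (l + 1) with hMdef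
  have hM : n l ^ 2 < M := hn l hl1
  have hnlM : n l < M := lt_of_le_of_lt (Nat.le_self_pow two_ne_zero _) hM
  have hdM : d < M := lt_trans hdnl hnlM
  set s : ℕ := Q.natDegree with hsdef
  set L : Polynomial ℂ := Q.leadingCoeff with hLdef
  have hL0 : L ≠ 0 := Polynomial.leadingCoeff_ne_zero.mpr hQ0
  set r : ℕ := L.natDegree with hrdef
  set a0 : ℂ := L.leadingCoeff with ha0def
  have ha00 : a0 ≠ 0 := Polynomial.leadingCoeff_ne_zero.mpr hL0
  set c : ℂ := a (l + 1) with hcdef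
  have hc0 : c ≠ 0 := ha (l + 1) (by omega)
  have hrd : r ≤ d := by
    have h := hcd s
    rwa [show Q.coeff s = L from rfl] at h
  have hss : s ≤ d := hsd
  set N : ℕ := s * M + r with hNdef
  have hNlt : N < M ^ 2 := by
    have h1 : s * M ≤ d * M := Nat.mul_le_mul_right _ hss
    have h2 : (d + 1) * M ≤ M * M := Nat.mul_le_mul_right _ (by omega)
    have h3 : d * M + M = (d + 1) * M := by ring
    have h4 : M ^ 2 = M * M := sq M
    omega
  have hdsnl : d + s * n l < M := by
    have h1 : s * n l ≤ d * n l := Nat.mul_le_mul_right _ hss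
    have h3 : n l + d * n l = (d + 1) * n l := by ring
    have h4 : (d + 1) * n l ≤ n l * n l := Nat.mul_le_mul_right _ (by omega)
    have h5 : n l ^ 2 = n l * n l := sq (n l)
    omega
  -- truncations of `f`
  set F : Polynomial ℂ := ∑ k ∈ Finset.Icc 1 (l + 1),
      Polynomial.C (a k) * Polynomial.X ^ (n k) with hFdef
  set g : Polynomial ℂ := ∑ k ∈ Finset.Icc 1 l,
      Polynomial.C (a k) * Polynomial.X ^ (n k) with hgdef
  have hFg : F = g + Polynomial.C c * Polynomial.X ^ M := by
    rw [hFdef, Finset.sum_Icc_succ_top (by omega)]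
  have hnkM : ∀ k ∈ Finset.Icc 1 (l + 1), n k ≤ M := by
    intro k hk
    simp only [Finset.mem_Icc] at hk
    rcases eq_or_lt_of_le hk.2 with h | h
    · rw [h]
    · exact le_of_lt (hmono k (l + 1) hk.1 h)
  have hFdeg : F.natDegree ≤ M := by
    apply Polynomial.natDegree_sum_le_of_forall_le
    intro k hk
    refine le_trans Polynomial.natDegree_mul_le ?_
    simp [hnkM k hk]
  have hgdeg : g.natDegree ≤ n l := by
    apply Polynomial.natDegree_sum_le_of_forall_le
    intro k hk
    simp only [Finset.mem_Icc] at hk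
    have h : n k ≤ n l := by
      rcases eq_or_lt_of_le hk.2 with h | h
      · rw [h]
      · exact le_of_lt (hmono k l hk.1 h)
    refine le_trans Polynomial.natDegree_mul_le ?_
    simp [h]
  -- coefficients of `f` agree with those of `F` below `N + 1`
  have hFcoeff : ∀ m, F.coeff m = ∑ k ∈ Finset.Icc 1 (l + 1),
      (if m = n k then a k else 0) := by
    intro m
    rw [hFdef, Polynomial.finset_sum_coeff]
    apply Finset.sum_congr rfl
    intro k _
    rw [Polynomial.coeff_C_mul, Polynomial.coeff_X_pow]
    split <;> simp
  have hagree : ∀ m ≤ N, PowerSeries.coeff m f = F.coeff m := by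
    intro m hm
    have hbig : ∀ k, l + 2 ≤ k → m < n k := by
      intro k hk
      have h1 : M ^ 2 < n (l + 1 + 1) := hn (l + 1) (by omega)
      have h2 : n (l + 1 + 1) ≤ n k := by
        rcases eq_or_lt_of_le hk with h | h
        · rw [show k = l + 1 + 1 by omega]
        · exact le_of_lt (hmono (l + 1 + 1) k (by omega) (by omega))
      omega
    by_cases hex : ∃ k ∈ Finset.Icc 1 (l + 1), n k = m
    · obtain ⟨k, hk, hkm⟩ := hex
      simp only [Finset.mem_Icc] at hk
      rw [← hkm, hf1 k hk.1, hFcoeff]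
      rw [Finset.sum_eq_single k]
      · simp
      · intro k' hk' hne
        simp only [Finset.mem_Icc] at hk'
        have h : n k' ≠ n k := by
          rcases lt_or_gt_of_ne hne with h | h
          · exact ne_of_lt (hmono k' k hk'.1 h)
          · exact (ne_of_lt (hmono k k' hk.1 h)).symm
        rw [if_neg (fun hh => h hh.symm)]
      · intro h
        simp only [Finset.mem_Icc] at h
        omega
    · rw [hf2 m, hFcoeff]
      · symm
        apply Finset.sum_eq_zero
        intro k hk
        have h : m ≠ n k := fun h => hex ⟨k, hk, h.symm⟩
        rw [if_neg h]
      · intro k hk1 hkm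
        by_cases hk : k ≤ l + 1
        · exact hex ⟨k, Finset.mem_Icc.mpr ⟨hk1, hk⟩, hkm⟩
        · exact absurd hkm (by have := hbig k (by omega); omega)
  -- reduce to the polynomial `G := Q.eval F`
  set G : Polynomial ℂ := Q.eval F with hGdef
  have hmain : PowerSeries.coeff N (MvPolynomial.aeval ![PowerSeries.X, f] P) =
      G.coeff N := by
    have hdvd1 : (PowerSeries.X : PowerSeries ℂ) ^ (N + 1) ∣ f - ↑F := by
      rw [PowerSeries.X_pow_dvd_iff]
      intro m hm
      rw [map_sub, Polynomial.coeff_coe, hagree m (by omega), sub_self]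
    have hdvd2 : (PowerSeries.X : PowerSeries ℂ) ^ (N + 1) ∣
        MvPolynomial.aeval ![PowerSeries.X, f] P -
          MvPolynomial.aeval ![PowerSeries.X, (↑F : PowerSeries ℂ)] P := by
      rw [key f, key ↑F]
      exact dvd_trans hdvd1 (Polynomial.sub_dvd_eval_sub _ _ _)
    have h1 : PowerSeries.coeff N (MvPolynomial.aeval ![PowerSeries.X, f] P) =
        PowerSeries.coeff N (MvPolynomial.aeval ![PowerSeries.X, (↑F : PowerSeries ℂ)] P) := by
      have h := (PowerSeries.X_pow_dvd_iff.mp hdvd2) N (by omega)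
      rw [map_sub, sub_eq_zero] at h
      exact h
    have h2 : Polynomial.eval ((F : PowerSeries ℂ))
        (Q.map Polynomial.coeToPowerSeries.ringHom) = ((G : Polynomial ℂ) : PowerSeries ℂ) := by
      rw [hGdef, Polynomial.eval_map, ← Polynomial.coeToPowerSeries.ringHom_apply,
        ← Polynomial.coeToPowerSeries.ringHom_apply, Polynomial.eval₂_hom]
    rw [h1, key ↑F, h2, Polynomial.coeff_coe]
  -- compute `G.coeff N = c ^ s * a0`
  have hGN : G.coeff N = c ^ s * a0 := by
    have hexp : G = ∑ j ∈ Finset.range (s + 1), Q.coeff j * F ^ j := by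
      rw [hGdef]; exact Polynomial.eval_eq_sum_range F
    rw [hexp, Polynomial.finset_sum_coeff, Finset.sum_range_succ]
    have hzero : ∀ j ∈ Finset.range s, (Q.coeff j * F ^ j).coeff N = 0 := by
      intro j hj
      simp only [Finset.mem_range] at hj
      apply Polynomial.coeff_eq_zero_of_natDegree_lt
      calc (Q.coeff j * F ^ j).natDegree
          ≤ (Q.coeff j).natDegree + (F ^ j).natDegree := Polynomial.natDegree_mul_le
        _ ≤ d + j * M := add_le_add (hcd j)
            (le_trans Polynomial.natDegree_pow_le (Nat.mul_le_mul_left j hFdeg))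
        _ < N := by
            have h1 : (j + 1) * M ≤ s * M := Nat.mul_le_mul_right _ (by omega)
            have h2 : M + j * M = (j + 1) * M := by ring
            omega
    rw [Finset.sum_eq_zero hzero, zero_add, show Q.coeff s = L from rfl, hFg, add_pow,
      Finset.mul_sum, Polynomial.finset_sum_coeff, Finset.sum_range_succ']
    have hz2 : ∀ t ∈ Finset.range s,
        (L * (g ^ (t + 1) * (Polynomial.C c * Polynomial.X ^ M) ^ (s - (t + 1)) *
          ((s.choose (t + 1) : ℕ) : Polynomial ℂ))).coeff N = 0 := by
      intro t ht
      simp only [Finset.mem_range] at ht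
      apply Polynomial.coeff_eq_zero_of_natDegree_lt
      have hZ : ((Polynomial.C c * Polynomial.X ^ M) ^ (s - (t + 1))).natDegree
          ≤ (s - (t + 1)) * M := by
        refine le_trans Polynomial.natDegree_pow_le (Nat.mul_le_mul_left _ ?_)
        refine le_trans Polynomial.natDegree_mul_le ?_
        simp
      have hgp : (g ^ (t + 1)).natDegree ≤ (t + 1) * n l :=
        le_trans Polynomial.natDegree_pow_le (Nat.mul_le_mul_left _ hgdeg)
      calc (L * (g ^ (t + 1) * (Polynomial.C c * Polynomial.X ^ M) ^ (s - (t + 1)) *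
              ((s.choose (t + 1) : ℕ) : Polynomial ℂ))).natDegree
          ≤ L.natDegree + (g ^ (t + 1) * (Polynomial.C c * Polynomial.X ^ M) ^ (s - (t + 1)) *
              ((s.choose (t + 1) : ℕ) : Polynomial ℂ)).natDegree := Polynomial.natDegree_mul_le
        _ ≤ r + ((g ^ (t + 1) * (Polynomial.C c * Polynomial.X ^ M) ^ (s - (t + 1))).natDegree
              + ((s.choose (t + 1) : ℕ) : Polynomial ℂ).natDegree) :=
            add_le_add le_rfl Polynomial.natDegree_mul_le
        _ ≤ r + (((g ^ (t + 1)).natDegree +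
              ((Polynomial.C c * Polynomial.X ^ M) ^ (s - (t + 1))).natDegree) + 0) := by
            refine add_le_add le_rfl (add_le_add Polynomial.natDegree_mul_le ?_)
            simp [Polynomial.natDegree_natCast]
        _ ≤ r + (((t + 1) * n l + (s - (t + 1)) * M) + 0) :=
            add_le_add le_rfl (add_le_add (add_le_add hgp hZ) le_rfl)
        _ < N := by
            have h1 : (t + 1) * n l ≤ s * n l := Nat.mul_le_mul_right _ (by omega)
            have h2 : (s - (t + 1)) * M ≤ (s - 1) * M := Nat.mul_le_mul_right _ (by omega)
            have h3 : r + s * n l < M := by omega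
            have h4 : M + (s - 1) * M = s * M := by
              have : s - 1 + 1 = s := by omega
              calc M + (s - 1) * M = (s - 1 + 1) * M := by ring
                _ = s * M := by rw [this]
            omega
    rw [Finset.sum_eq_zero hz2, zero_add]
    simp only [pow_zero, one_mul, Nat.sub_zero, Nat.choose_zero_right, Nat.cast_one, mul_one]
    rw [mul_pow, ← Polynomial.C_pow, ← pow_mul,
      show L * (Polynomial.C (c ^ s) * Polynomial.X ^ (M * s)) =
        Polynomial.C (c ^ s) * (L * Polynomial.X ^ (M * s)) by ring,
      Polynomial.coeff_C_mul, show N = r + M * s by rw [hNdef]; ring,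
      Polynomial.coeff_mul_X_pow, hrdef, ha0def, Polynomial.coeff_natDegree]
  intro hzero
  rw [hzero, map_zero] at hmain
  exact (mul_ne_zero (pow_ne_zero s hc0) ha00) (by rw [← hGN, ← hmain])
end
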